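/- Let (u₁,u₂) be a positive radially symmetric solution of the coupled Gross–Pitaevskii system with coefficients λ₁,ε, λ₂,ε > 0. Then there exists a constant C_ε > 0, independent of r, such that |u_i'(r)| ≤ C_ε r u_i(r) for all r > 2√(λ_{i,ε}), i = 1,2. -/

import Mathlib

open MeasureTheory Filter
open scoped Real Topology

noncomputable section

abbrev Pt := EuclideanSpace ℝ (Fin 2)

/-- The Laplacian, written as the sum of second directional derivatives along
the coordinate axes. -/
def lapR (f : Pt → ℝ) (x : Pt) : ℝ :=
  ∑ i : Fin 2, iteratedDeriv 2 (fun t : ℝ => f (x + t • EuclideanSpace.single i (1:ℝ))) 0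

/-- `(η₁, η₂)` solves the coupled Gross–Pitaevskii system with coefficients
`lam₁, lam₂`, including the decay at infinity. -/
def GPSolution (g₁ g₂ g ε lam₁ lam₂ : ℝ) (η₁ η₂ : Pt → ℝ) : Prop :=
  ContDiff ℝ (⊤ : ℕ∞) η₁ ∧ ContDiff ℝ (⊤ : ℕ∞) η₂ ∧
  (∀ x : Pt, -ε ^ 2 * lapR η₁ x + ‖x‖ ^ 2 * η₁ x + g₁ * η₁ x ^ 3
      + g * η₁ x * η₂ x ^ 2 = lam₁ * η₁ x) ∧
  (∀ x : Pt, -ε ^ 2 * lapR η₂ x + ‖x‖ ^ 2 * η₂ x + g₂ * η₂ x ^ 3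
      + g * η₁ x ^ 2 * η₂ x = lam₂ * η₂ x) ∧
  Tendsto η₁ (cocompact Pt) (𝓝 0) ∧ Tendsto η₂ (cocompact Pt) (𝓝 0)

/-- A positive solution of the coupled Gross–Pitaevskii system. -/
def GPPositiveSolution (g₁ g₂ g ε lam₁ lam₂ : ℝ) (η₁ η₂ : Pt → ℝ) : Prop :=
  GPSolution g₁ g₂ g ε lam₁ lam₂ η₁ η₂ ∧ (∀ x, 0 < η₁ x) ∧ (∀ x, 0 < η₂ x)

/-! ### Auxiliary lemmas -/

set_option maxHeartbeats 1000000 in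
/-- Key 1-D lemma: Riccati-type gradient bound for a positive solution of the
radial ODE `ε²(F'' + F'/r) = V F` with `0 ≤ V ≤ A r²`. -/
lemma key_radial_bound (F V : ℝ → ℝ) (ε b A : ℝ) (hε : 0 < ε) (hb : 0 < b)
    (hF : ContDiff ℝ (⊤ : ℕ∞) F) (hFpos : ∀ r, 0 < F r)
    (hF0 : Tendsto F atTop (𝓝 0))
    (hODE : ∀ r, b ≤ r → ε ^ 2 * (deriv (deriv F) r + deriv F r / r) = V r * F r)
    (hV0 : ∀ r, b ≤ r → 0 ≤ V r)
    (hVA : ∀ r, 2 * b ≤ r → V r ≤ A * r ^ 2) :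
    ∃ C > 0, ∀ r, 2 * b ≤ r → |deriv F r| ≤ C * r * F r := by
  have hε2 : (0:ℝ) < ε ^ 2 := pow_pos hε 2
  have dF : Differentiable ℝ F := hF.differentiable (by simp)
  have hF' : ContDiff ℝ (⊤ : ℕ∞) (deriv F) := (contDiff_infty_iff_deriv.mp hF).2
  have dF' : Differentiable ℝ (deriv F) := hF'.differentiable (by simp)
  -- the function r ↦ r F'(r) is monotone on [b, ∞)
  have hPd : ∀ r : ℝ, HasDerivAt (fun s => s * deriv F s)
      (deriv F r + r * deriv (deriv F) r) r := by
    intro r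
    have h : HasDerivAt (fun s => s * deriv F s) (1 * deriv F r + r * deriv (deriv F) r) r :=
      (hasDerivAt_id' r).mul (dF' r).hasDerivAt
    simpa [one_mul] using h
  have hF'' : ∀ r, b ≤ r → deriv (deriv F) r = V r * F r / ε ^ 2 - deriv F r / r := by
    intro r hr
    have hr0 : r ≠ 0 := (lt_of_lt_of_le hb hr).ne'
    have he : (ε:ℝ) ^ 2 ≠ 0 := hε2.ne'
    have := hODE r hr
    field_simp at this ⊢
    linarith
  have hPmono : MonotoneOn (fun s => s * deriv F s) (Set.Ici b) := by
    apply monotoneOn_of_deriv_nonneg (convex_Ici b)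
    · exact (continuous_id.mul dF'.continuous).continuousOn
    · exact ((differentiable_id.mul dF').differentiableOn).mono interior_subset
    · intro x hx
      rw [interior_Ici] at hx
      have hxb : b ≤ x := le_of_lt hx
      have hx0 : (0:ℝ) < x := lt_of_lt_of_le hb hxb
      rw [(hPd x).deriv, hF'' x hxb]
      have h1 : deriv F x + x * (V x * F x / ε ^ 2 - deriv F x / x)
          = x * V x * F x / ε ^ 2 := by
        field_simp
        ring
      rw [h1]
      exact div_nonneg (mul_nonneg (mul_nonneg hx0.le (hV0 x hxb)) (hFpos x).le) hε2.le
  -- F' ≤ 0 on [b, ∞)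
  have hF'np : ∀ r, b ≤ r → deriv F r ≤ 0 := by
    intro r₀ hr₀
    by_contra hpos
    push_neg at hpos
    have hr₀0 : (0:ℝ) < r₀ := lt_of_lt_of_le hb hr₀
    have hP0 : 0 < r₀ * deriv F r₀ := mul_pos hr₀0 hpos
    have hderiv_pos : ∀ r, r₀ ≤ r → 0 ≤ deriv F r := by
      intro r hr
      have h2 : r₀ * deriv F r₀ ≤ r * deriv F r :=
        hPmono (Set.mem_Ici.mpr hr₀) (Set.mem_Ici.mpr (le_trans hr₀ hr)) hr
      have hr0 : (0:ℝ) < r := lt_of_lt_of_le hr₀0 hr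
      nlinarith
    have hFmono : MonotoneOn F (Set.Ici r₀) := by
      apply monotoneOn_of_deriv_nonneg (convex_Ici r₀) dF.continuous.continuousOn
        (dF.differentiableOn.mono interior_subset)
      intro x hx
      rw [interior_Ici] at hx
      exact hderiv_pos x (le_of_lt hx)
    have : F r₀ ≤ 0 := by
      apply ge_of_tendsto hF0
      filter_upwards [eventually_ge_atTop r₀] with r hr
      exact hFmono (Set.mem_Ici.mpr le_rfl) (Set.mem_Ici.mpr hr) hr
    exact absurd this (not_le.mpr (hFpos r₀))
  -- choose the constant K
  have hb2 : (0:ℝ) < 2 * b ^ 2 := by nlinarith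
  set A' : ℝ := max A 0 with hA'
  set K : ℝ := 1 / (2 * b ^ 2) + Real.sqrt A' / ε + 1 with hK
  have hA'0 : 0 ≤ A' := le_max_right _ _
  have hsq : 0 ≤ Real.sqrt A' / ε := div_nonneg (Real.sqrt_nonneg _) hε.le
  have hb2' : 0 < 1 / (2 * b ^ 2) := by positivity
  have hK0 : 0 < K := by rw [hK]; linarith
  have hKs : Real.sqrt A' / ε ≤ K := by rw [hK]; linarith
  have hKb : 1 / (2 * b ^ 2) ≤ K := by rw [hK]; linarith
  have hKineq : A' / ε ^ 2 + K / (2 * b ^ 2) ≤ K ^ 2 := by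
    have h1 : (Real.sqrt A' / ε) ^ 2 = A' / ε ^ 2 := by
      rw [div_pow, Real.sq_sqrt hA'0]
    have h2 : K * (Real.sqrt A' / ε) ≤ K * K := mul_le_mul_of_nonneg_left hKs hK0.le
    have h3 : K * (1 / (2 * b ^ 2)) ≤ K * K := mul_le_mul_of_nonneg_left hKb hK0.le
    have h4 : (Real.sqrt A' / ε) * (Real.sqrt A' / ε) ≤ K * (Real.sqrt A' / ε) :=
      mul_le_mul_of_nonneg_right hKs hsq
    have h5 : K / (2 * b ^ 2) = K * (1 / (2 * b ^ 2)) := by ring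
    nlinarith
  -- main claim: F' + K r F ≥ 0 on [2b, ∞)
  have hGnn : ∀ r, 2 * b ≤ r → 0 ≤ deriv F r + K * r * F r := by
    intro r₀ hr₀
    by_contra hneg
    push_neg at hneg
    set G : ℝ → ℝ := fun s => deriv F s + K * s * F s with hGdef
    set E : ℝ → ℝ := fun s => Real.exp (-(K * s ^ 2) / 2) with hEdef
    set W : ℝ → ℝ := fun s => s * E s * G s with hWdef
    have hEpos : ∀ s, 0 < E s := fun s => Real.exp_pos _
    have hEd : ∀ s : ℝ, HasDerivAt E (-(K * s) * E s) s := by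
      intro s
      have hinner : HasDerivAt (fun t : ℝ => -(K * t ^ 2) / 2) (-(K * (2 * s)) / 2) s := by
        have := (((hasDerivAt_pow 2 s).const_mul K).neg).div_const 2
        simpa using this
      have h := (Real.hasDerivAt_exp (-(K * s ^ 2) / 2)).comp s hinner
      have : HasDerivAt E (Real.exp (-(K * s ^ 2) / 2) * (-(K * (2 * s)) / 2)) s := h
      convert this using 1
      rw [hEdef]
      ring
    have hGd : ∀ s : ℝ, HasDerivAt G
        (deriv (deriv F) s + (K * F s + K * s * deriv F s)) s := by
      intro s
      have h1 : HasDerivAt (fun t => K * t * F t) (K * F s + K * s * deriv F s) s := by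
        have : HasDerivAt (fun t => K * t * F t) (K * 1 * F s + K * s * deriv F s) s :=
          (((hasDerivAt_id' s).const_mul K).mul (dF s).hasDerivAt)
        simpa [mul_comm, mul_assoc, mul_one] using this
      exact (dF' s).hasDerivAt.add h1
    have hWd : ∀ s : ℝ, HasDerivAt W
        ((1 * E s + s * (-(K * s) * E s)) * G s
          + s * E s * (deriv (deriv F) s + (K * F s + K * s * deriv F s))) s :=
      fun s => ((hasDerivAt_id s).mul (hEd s)).mul (hGd s)
    -- deriv W ≤ 0 on (2b, ∞)
    have hWderiv_np : ∀ s, 2 * b ≤ s →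
        (1 * E s + s * (-(K * s) * E s)) * G s
          + s * E s * (deriv (deriv F) s + (K * F s + K * s * deriv F s)) ≤ 0 := by
      intro s hs
      have hsb : b ≤ s := by linarith
      have hs0 : (0:ℝ) < s := by linarith
      rw [hF'' s hsb]
      have hident : (1 * E s + s * (-(K * s) * E s)) * G s
          + s * E s * ((V s * F s / ε ^ 2 - deriv F s / s) + (K * F s + K * s * deriv F s))
          = E s * s * ((V s / ε ^ 2 + 2 * K - K ^ 2 * s ^ 2) * F s) := by
        rw [hGdef]
        field_simp
        ring
      rw [hident]
      have hV : V s / ε ^ 2 + 2 * K - K ^ 2 * s ^ 2 ≤ 0 := by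
        have h1 : V s ≤ A' * s ^ 2 := by
          calc V s ≤ A * s ^ 2 := hVA s hs
            _ ≤ A' * s ^ 2 := by nlinarith [le_max_left A 0, sq_nonneg s]
        have hs2 : 4 * b ^ 2 ≤ s ^ 2 := by nlinarith
        have h2 : 2 * K ≤ K / (2 * b ^ 2) * s ^ 2 := by
          rw [div_mul_eq_mul_div, le_div_iff₀ hb2]
          nlinarith
        have h3 : A' / ε ^ 2 * s ^ 2 + K / (2 * b ^ 2) * s ^ 2 ≤ K ^ 2 * s ^ 2 := by
          nlinarith [sq_nonneg s]
        have h4 : V s / ε ^ 2 ≤ A' / ε ^ 2 * s ^ 2 := by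
          rw [div_mul_eq_mul_div, div_le_div_iff₀ hε2 hε2]
          nlinarith
        linarith
      have hFp := (hFpos s).le
      have hEp := (hEpos s).le
      have : 0 ≤ E s * s * (-(V s / ε ^ 2 + 2 * K - K ^ 2 * s ^ 2) * F s) :=
        mul_nonneg (mul_nonneg hEp hs0.le) (mul_nonneg (neg_nonneg.mpr hV) hFp)
      nlinarith
    have hWanti : AntitoneOn W (Set.Ici (2 * b)) := by
      apply antitoneOn_of_deriv_nonpos (convex_Ici _)
      · exact HasDerivAt.continuousOn (fun x _ => hWd x)
      · intro x hx
        exact (hWd x).differentiableAt.differentiableWithinAt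
      · intro x hx
        rw [interior_Ici] at hx
        rw [(hWd x).deriv]
        exact hWderiv_np x (le_of_lt hx)
    have hr₀0 : (0:ℝ) < r₀ := by linarith
    have hWr₀ : W r₀ < 0 := by
      have h := mul_pos hr₀0 (hEpos r₀)
      exact mul_neg_of_pos_of_neg h hneg
    set δ : ℝ := -W r₀ * (K * r₀ / 2) with hδ
    have hKr2 : 0 < K * r₀ / 2 := div_pos (mul_pos hK0 hr₀0) two_pos
    have hδ0 : 0 < δ := mul_pos (by linarith) hKr2
    have hF'le : ∀ r, r₀ ≤ r → deriv F r ≤ -δ := by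
      intro r hr
      have hr2b : 2 * b ≤ r := le_trans hr₀ hr
      have hr0 : (0:ℝ) < r := lt_of_lt_of_le hr₀0 hr
      have hW : W r ≤ W r₀ := hWanti (Set.mem_Ici.mpr hr₀) (Set.mem_Ici.mpr hr2b) hr
      have hrE : 0 < r * E r := mul_pos hr0 (hEpos r)
      have hGle : G r ≤ W r₀ / (r * E r) := by
        rw [le_div_iff₀ hrE]
        calc G r * (r * E r) = W r := by rw [hWdef]; ring
          _ ≤ W r₀ := hW
      have hexp : K * r / 2 ≤ 1 / (r * E r) := by
        have h2 : 1 / E r = Real.exp (K * r ^ 2 / 2) := by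
          rw [show E r = Real.exp (-(K * r ^ 2) / 2) from rfl, one_div, ← Real.exp_neg,
            neg_div, neg_neg]
        have h3 : K * r ^ 2 / 2 ≤ Real.exp (K * r ^ 2 / 2) := by
          have := Real.add_one_le_exp (K * r ^ 2 / 2)
          linarith
        have h4 : 1 / (r * E r) = (1 / E r) / r := by
          rw [div_div, mul_comm]
        rw [h4, h2, le_div_iff₀ hr0]
        calc K * r / 2 * r = K * r ^ 2 / 2 := by ring
          _ ≤ Real.exp (K * r ^ 2 / 2) := h3
      have hWrle : W r₀ / (r * E r) ≤ -δ := by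
        rw [div_eq_mul_one_div]
        calc W r₀ * (1 / (r * E r)) ≤ W r₀ * (K * r / 2) :=
              mul_le_mul_of_nonpos_left hexp hWr₀.le
          _ ≤ W r₀ * (K * r₀ / 2) := by
              apply mul_le_mul_of_nonpos_left _ hWr₀.le
              nlinarith
          _ = -δ := by rw [hδ]; ring
      have hKrF : 0 ≤ K * r * F r :=
        mul_nonneg (mul_nonneg hK0.le hr0.le) (hFpos r).le
      have hGr : deriv F r + K * r * F r ≤ -δ := le_trans hGle hWrle
      linarith
    -- contradiction via the mean value theorem
    set R : ℝ := r₀ + F r₀ / δ + 1 with hR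
    have hFδ : 0 < F r₀ / δ := div_pos (hFpos r₀) hδ0
    have hRr₀ : r₀ < R := by rw [hR]; linarith
    obtain ⟨ξ, hξ, hslope⟩ := exists_hasDerivAt_eq_slope F (deriv F) hRr₀
      dF.continuous.continuousOn (fun x _ => (dF x).hasDerivAt)
    have hξle : deriv F ξ ≤ -δ := hF'le ξ (le_of_lt hξ.1)
    have hs2 : (F R - F r₀) / (R - r₀) ≤ -δ := hslope ▸ hξle
    have hRR : (0:ℝ) < R - r₀ := by linarith
    have hFR : F R - F r₀ ≤ -δ * (R - r₀) := by
      rw [div_le_iff₀ hRR] at hs2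
      linarith
    have hRr : R - r₀ = F r₀ / δ + 1 := by rw [hR]; ring
    have hcalc : δ * (F r₀ / δ + 1) = F r₀ + δ := by
      field_simp
    rw [hRr] at hFR
    have : F R ≤ F r₀ - (F r₀ + δ) := by nlinarith [hcalc]
    linarith [hFpos R]
  refine ⟨K, hK0, fun r hr => ?_⟩
  have hrb : b ≤ r := by linarith
  have hr0 : (0:ℝ) < r := by linarith
  have h1 := hF'np r hrb
  have h2 := hGnn r hr
  have h3 : 0 ≤ K * r * F r :=
    mul_nonneg (mul_nonneg hK0.le hr0.le) (hFpos r).le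
  rw [abs_le]
  constructor <;> linarith

lemma norm_smul_single (r : ℝ) (hr : 0 ≤ r) (i : Fin 2) :
    ‖r • EuclideanSpace.single i (1:ℝ)‖ = r := by
  rw [norm_smul, EuclideanSpace.norm_single, norm_one, mul_one, Real.norm_eq_abs,
    abs_of_nonneg hr]

lemma tendsto_line :
    Tendsto (fun t : ℝ => t • EuclideanSpace.single (0 : Fin 2) (1:ℝ)) atTop (cocompact Pt) := by
  rw [hasBasis_cocompact.tendsto_right_iff]
  intro K hK
  obtain ⟨R, hR⟩ := (Metric.isBounded_iff_subset_closedBall 0).mp hK.isBounded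
  filter_upwards [eventually_gt_atTop (max R 0)] with t ht
  intro hmem
  have h1 := hR hmem
  rw [Metric.mem_closedBall, dist_zero_right,
    norm_smul_single t (le_of_lt (lt_of_le_of_lt (le_max_right R 0) ht))] at h1
  exact absurd h1 (not_le.mpr (lt_of_le_of_lt (le_max_left R 0) ht))

lemma bounded_of_tendsto (F : ℝ → ℝ) (hc : Continuous F)
    (h0 : Tendsto F atTop (𝓝 0)) (a : ℝ) :
    ∃ M, 0 ≤ M ∧ ∀ r, a ≤ r → |F r| ≤ M := by
  obtain ⟨T, hT⟩ := (Metric.tendsto_atTop.mp h0) 1 one_pos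
  obtain ⟨C, hC⟩ := (isCompact_Icc (a := a) (b := T)).exists_bound_of_continuousOn
    hc.continuousOn
  refine ⟨max C 1, le_trans zero_le_one (le_max_right _ _), fun r hr => ?_⟩
  rcases le_or_gt r T with h | h
  · exact le_trans (hC r ⟨hr, h⟩) (le_max_left _ _)
  · have := hT r h.le
    rw [Real.dist_eq, sub_zero] at this
    exact le_trans this.le (le_max_right _ _)

lemma iteratedDeriv_two' (g : ℝ → ℝ) : iteratedDeriv 2 g = deriv (deriv g) := by
  rw [show (2:ℕ) = 1 + 1 from rfl, iteratedDeriv_succ, iteratedDeriv_one]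

lemma lapR_radial (u : Pt → ℝ) (f : ℝ → ℝ) (hu : ContDiff ℝ (⊤ : ℕ∞) u)
    (hrad : ∀ x : Pt, u x = f ‖x‖) {r : ℝ} (hr : 0 < r) :
    lapR u (r • EuclideanSpace.single (0 : Fin 2) (1:ℝ))
      = deriv (deriv (fun t : ℝ => u (t • EuclideanSpace.single (0 : Fin 2) (1:ℝ)))) r
        + deriv (fun t : ℝ => u (t • EuclideanSpace.single (0 : Fin 2) (1:ℝ))) r / r := by
  set e₀ : Pt := EuclideanSpace.single (0 : Fin 2) (1:ℝ) with he₀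
  set F : ℝ → ℝ := fun t => u (t • e₀) with hFdef
  have hFsm : ContDiff ℝ (⊤ : ℕ∞) F := hu.comp (contDiff_id.smul contDiff_const)
  have dF : Differentiable ℝ F := hFsm.differentiable (by simp)
  have dF' : Differentiable ℝ (deriv F) :=
    ((contDiff_infty_iff_deriv.mp hFsm).2).differentiable (by simp)
  have hfF : ∀ s : ℝ, 0 ≤ s → f s = F s := by
    intro s hs
    rw [hFdef]
    simp only []
    rw [hrad (s • e₀), norm_smul_single s hs]
  -- term 0
  have h0 : (fun t : ℝ => u (r • e₀ + t • EuclideanSpace.single (0 : Fin 2) (1:ℝ)))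
      = fun t => F (r + t) := by
    funext t
    rw [hFdef]
    simp only []
    rw [add_smul]
  have hterm0 : iteratedDeriv 2
      (fun t : ℝ => u (r • e₀ + t • EuclideanSpace.single (0 : Fin 2) (1:ℝ))) 0
      = deriv (deriv F) r := by
    rw [iteratedDeriv_two', h0]
    have hd : deriv (fun t : ℝ => F (r + t)) = fun t => deriv F (r + t) := by
      funext t
      exact deriv_comp_const_add F r t
    rw [hd]
    rw [deriv_comp_const_add (deriv F) r 0, add_zero]
  -- term 1
  have hnorm1 : ∀ t : ℝ, ‖r • e₀ + t • EuclideanSpace.single (1 : Fin 2) (1:ℝ)‖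
      = Real.sqrt (r ^ 2 + t ^ 2) := by
    intro t
    rw [EuclideanSpace.norm_eq, Fin.sum_univ_two]
    congr 1
    simp [he₀, PiLp.add_apply, PiLp.smul_apply, EuclideanSpace.single_apply,
      Real.norm_eq_abs, sq_abs]
  have hsqrt_pos : ∀ t : ℝ, 0 < Real.sqrt (r ^ 2 + t ^ 2) := by
    intro t
    apply Real.sqrt_pos.mpr
    nlinarith [sq_nonneg t]
  have h1 : (fun t : ℝ => u (r • e₀ + t • EuclideanSpace.single (1 : Fin 2) (1:ℝ)))
      = fun t => F (Real.sqrt (r ^ 2 + t ^ 2)) := by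
    funext t
    rw [hrad, hnorm1 t, hfF _ (Real.sqrt_nonneg _)]
  have hs : ∀ t : ℝ, HasDerivAt (fun t : ℝ => Real.sqrt (r ^ 2 + t ^ 2))
      (t / Real.sqrt (r ^ 2 + t ^ 2)) t := by
    intro t
    have hinner : HasDerivAt (fun t : ℝ => r ^ 2 + t ^ 2) (2 * t) t := by
      have := (hasDerivAt_pow 2 t).const_add (r ^ 2)
      simpa using this
    have hne : r ^ 2 + t ^ 2 ≠ 0 := by nlinarith [sq_nonneg t]
    have h : HasDerivAt (fun t : ℝ => Real.sqrt (r ^ 2 + t ^ 2))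
        (1 / (2 * Real.sqrt (r ^ 2 + t ^ 2)) * (2 * t)) t :=
      (Real.hasDerivAt_sqrt hne).comp t hinner
    convert h using 1
    have := (hsqrt_pos t).ne'
    field_simp
  have hd1 : ∀ t : ℝ, HasDerivAt (fun t : ℝ => F (Real.sqrt (r ^ 2 + t ^ 2)))
      (deriv F (Real.sqrt (r ^ 2 + t ^ 2)) * (t / Real.sqrt (r ^ 2 + t ^ 2))) t := by
    intro t
    exact (dF _).hasDerivAt.comp t (hs t)
  have hterm1 : iteratedDeriv 2
      (fun t : ℝ => u (r • e₀ + t • EuclideanSpace.single (1 : Fin 2) (1:ℝ))) 0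
      = deriv F r / r := by
    rw [iteratedDeriv_two', h1]
    have hdfun : deriv (fun t : ℝ => F (Real.sqrt (r ^ 2 + t ^ 2)))
        = fun t => deriv F (Real.sqrt (r ^ 2 + t ^ 2)) * (t / Real.sqrt (r ^ 2 + t ^ 2)) := by
      funext t
      exact (hd1 t).deriv
    rw [hdfun]
    have hs00 : Real.sqrt (r ^ 2 + 0 ^ 2) = r := by
      rw [show r ^ 2 + 0 ^ 2 = r ^ 2 by ring, Real.sqrt_sq hr.le]
    have hA : HasDerivAt (fun t : ℝ => deriv F (Real.sqrt (r ^ 2 + t ^ 2)))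
        (deriv (deriv F) (Real.sqrt (r ^ 2 + 0 ^ 2)) * (0 / Real.sqrt (r ^ 2 + 0 ^ 2))) 0 :=
      (dF' _).hasDerivAt.comp 0 (hs 0)
    have hB : HasDerivAt (fun t : ℝ => t / Real.sqrt (r ^ 2 + t ^ 2))
        ((1 * Real.sqrt (r ^ 2 + 0 ^ 2) - 0 * (0 / Real.sqrt (r ^ 2 + 0 ^ 2)))
          / Real.sqrt (r ^ 2 + 0 ^ 2) ^ 2) 0 :=
      (hasDerivAt_id 0).div (hs 0) (hsqrt_pos 0).ne'
    have hAB : HasDerivAt (fun t : ℝ => deriv F (Real.sqrt (r ^ 2 + t ^ 2))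
        * (t / Real.sqrt (r ^ 2 + t ^ 2))) _ 0 := hA.mul hB
    rw [hAB.deriv]
    rw [hs00]
    have hr0 : r ≠ 0 := hr.ne'
    field_simp
    ring
  rw [lapR, Fin.sum_univ_two, hterm0, hterm1]

lemma ode_line (u : Pt → ℝ) (f : ℝ → ℝ) (c : Pt → ℝ) (eps lam : ℝ)
    (hsm : ContDiff ℝ (⊤ : ℕ∞) u) (hrad : ∀ x, u x = f ‖x‖)
    (hode : ∀ x : Pt, eps ^ 2 * lapR u x = (‖x‖ ^ 2 - lam + c x) * u x)
    {r : ℝ} (hr : 0 < r) :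
    eps ^ 2 * (deriv (deriv (fun t : ℝ => u (t • EuclideanSpace.single (0:Fin 2) (1:ℝ)))) r
      + deriv (fun t : ℝ => u (t • EuclideanSpace.single (0:Fin 2) (1:ℝ))) r / r)
      = (r ^ 2 - lam + c (r • EuclideanSpace.single (0:Fin 2) (1:ℝ)))
        * u (r • EuclideanSpace.single (0:Fin 2) (1:ℝ)) := by
  rw [← lapR_radial u f hsm hrad hr, hode, norm_smul_single r hr.le]

set_option maxHeartbeats 1000000 in
/-- For a positive radial solution, the radial derivative is
controlled by `C_ε r u_i(r)` for `r > 2√λ_i`. -/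
theorem radial_derivative_bound
    (g₁ g₂ g ε lam₁ lam₂ : ℝ)
    (hg₁ : 0 < g₁) (hg₂ : 0 < g₂) (hg : 0 < g) (hε : 0 < ε)
    (hlam₁ : 0 < lam₁) (hlam₂ : 0 < lam₂)
    (u₁ u₂ : Pt → ℝ) (f₁ f₂ : ℝ → ℝ)
    (hu : GPPositiveSolution g₁ g₂ g ε lam₁ lam₂ u₁ u₂)
    (hrad₁ : ∀ x : Pt, u₁ x = f₁ ‖x‖) (hrad₂ : ∀ x : Pt, u₂ x = f₂ ‖x‖) :
    ∃ C > 0, (∀ r : ℝ, 2 * Real.sqrt lam₁ < r → |deriv f₁ r| ≤ C * r * f₁ r) ∧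
      (∀ r : ℝ, 2 * Real.sqrt lam₂ < r → |deriv f₂ r| ≤ C * r * f₂ r) := by
  obtain ⟨⟨hsm₁, hsm₂, hpde₁, hpde₂, hdec₁, hdec₂⟩, hpos₁, hpos₂⟩ := hu
  have hline : ContDiff ℝ (⊤ : ℕ∞)
      (fun t : ℝ => t • EuclideanSpace.single (0 : Fin 2) (1:ℝ)) :=
    contDiff_id.smul contDiff_const
  have hFsm₁ : ContDiff ℝ (⊤ : ℕ∞)
      (fun t : ℝ => u₁ (t • EuclideanSpace.single (0 : Fin 2) (1:ℝ))) := hsm₁.comp hline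
  have hFsm₂ : ContDiff ℝ (⊤ : ℕ∞)
      (fun t : ℝ => u₂ (t • EuclideanSpace.single (0 : Fin 2) (1:ℝ))) := hsm₂.comp hline
  have hF0₁ : Tendsto (fun t : ℝ => u₁ (t • EuclideanSpace.single (0 : Fin 2) (1:ℝ)))
      atTop (𝓝 0) := hdec₁.comp tendsto_line
  have hF0₂ : Tendsto (fun t : ℝ => u₂ (t • EuclideanSpace.single (0 : Fin 2) (1:ℝ)))
      atTop (𝓝 0) := hdec₂.comp tendsto_line
  obtain ⟨M₁, hM₁0, hM₁⟩ := bounded_of_tendsto _ hFsm₁.continuous hF0₁ 0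
  obtain ⟨M₂, hM₂0, hM₂⟩ := bounded_of_tendsto _ hFsm₂.continuous hF0₂ 0
  have hb₁ : 0 < Real.sqrt lam₁ := Real.sqrt_pos.mpr hlam₁
  have hb₂ : 0 < Real.sqrt lam₂ := Real.sqrt_pos.mpr hlam₂
  have hsq₁ : Real.sqrt lam₁ ^ 2 = lam₁ := Real.sq_sqrt hlam₁.le
  have hsq₂ : Real.sqrt lam₂ ^ 2 = lam₂ := Real.sq_sqrt hlam₂.le
  -- rewritten equations
  have hode₁ : ∀ x : Pt, ε ^ 2 * lapR u₁ x
      = (‖x‖ ^ 2 - lam₁ + (g₁ * u₁ x ^ 2 + g * u₂ x ^ 2)) * u₁ x := by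
    intro x
    linear_combination -(hpde₁ x)
  have hode₂ : ∀ x : Pt, ε ^ 2 * lapR u₂ x
      = (‖x‖ ^ 2 - lam₂ + (g₂ * u₂ x ^ 2 + g * u₁ x ^ 2)) * u₂ x := by
    intro x
    linear_combination -(hpde₂ x)
  -- bound the squares
  have hsqbd : ∀ r : ℝ, 0 ≤ r →
      g₁ * u₁ (r • EuclideanSpace.single (0 : Fin 2) (1:ℝ)) ^ 2
        + g * u₂ (r • EuclideanSpace.single (0 : Fin 2) (1:ℝ)) ^ 2 ≤ g₁ * M₁ ^ 2 + g * M₂ ^ 2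
      ∧ g₂ * u₂ (r • EuclideanSpace.single (0 : Fin 2) (1:ℝ)) ^ 2
        + g * u₁ (r • EuclideanSpace.single (0 : Fin 2) (1:ℝ)) ^ 2
          ≤ g₂ * M₂ ^ 2 + g * M₁ ^ 2 := by
    intro r hr
    have h1 := abs_le.mp (hM₁ r hr)
    have h2 := abs_le.mp (hM₂ r hr)
    have q1 : u₁ (r • EuclideanSpace.single (0 : Fin 2) (1:ℝ)) ^ 2 ≤ M₁ ^ 2 := by
      nlinarith [h1.1, h1.2]
    have q2 : u₂ (r • EuclideanSpace.single (0 : Fin 2) (1:ℝ)) ^ 2 ≤ M₂ ^ 2 := by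
      nlinarith [h2.1, h2.2]
    constructor
    · nlinarith [mul_le_mul_of_nonneg_left q1 hg₁.le, mul_le_mul_of_nonneg_left q2 hg.le]
    · nlinarith [mul_le_mul_of_nonneg_left q2 hg₂.le, mul_le_mul_of_nonneg_left q1 hg.le]
  -- apply the key lemma to u₁
  obtain ⟨C₁, hC₁0, hC₁⟩ := key_radial_bound
    (fun t : ℝ => u₁ (t • EuclideanSpace.single (0 : Fin 2) (1:ℝ)))
    (fun r : ℝ => r ^ 2 - lam₁
      + (g₁ * u₁ (r • EuclideanSpace.single (0 : Fin 2) (1:ℝ)) ^ 2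
        + g * u₂ (r • EuclideanSpace.single (0 : Fin 2) (1:ℝ)) ^ 2))
    ε (Real.sqrt lam₁) (1 + (g₁ * M₁ ^ 2 + g * M₂ ^ 2) / (4 * Real.sqrt lam₁ ^ 2))
    hε hb₁ hFsm₁ (fun r => hpos₁ _) hF0₁
    (fun r hr => ode_line u₁ f₁ _ ε lam₁ hsm₁ hrad₁ hode₁ (lt_of_lt_of_le hb₁ hr))
    (by
      intro r hr
      show 0 ≤ r ^ 2 - lam₁
        + (g₁ * u₁ (r • EuclideanSpace.single (0 : Fin 2) (1:ℝ)) ^ 2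
          + g * u₂ (r • EuclideanSpace.single (0 : Fin 2) (1:ℝ)) ^ 2)
      have h1 : 0 ≤ g₁ * u₁ (r • EuclideanSpace.single (0 : Fin 2) (1:ℝ)) ^ 2 :=
        mul_nonneg hg₁.le (sq_nonneg _)
      have h2 : 0 ≤ g * u₂ (r • EuclideanSpace.single (0 : Fin 2) (1:ℝ)) ^ 2 :=
        mul_nonneg hg.le (sq_nonneg _)
      nlinarith [Real.sqrt_nonneg lam₁])
    (by
      intro r hr
      have hr0 : (0:ℝ) ≤ r := le_trans (by nlinarith) hr
      have hB := (hsqbd r hr0).1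
      have hB0 : 0 ≤ g₁ * M₁ ^ 2 + g * M₂ ^ 2 := by
        have := mul_nonneg hg₁.le (sq_nonneg M₁)
        have := mul_nonneg hg.le (sq_nonneg M₂)
        linarith
      have h4b : 4 * Real.sqrt lam₁ ^ 2 ≤ r ^ 2 := by nlinarith
      have hpos4 : (0:ℝ) < 4 * Real.sqrt lam₁ ^ 2 := by nlinarith
      have hdiv : g₁ * M₁ ^ 2 + g * M₂ ^ 2
          ≤ (g₁ * M₁ ^ 2 + g * M₂ ^ 2) / (4 * Real.sqrt lam₁ ^ 2) * r ^ 2 := by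
        rw [div_mul_eq_mul_div, le_div_iff₀ hpos4]
        nlinarith [mul_le_mul_of_nonneg_left h4b hB0]
      nlinarith)
  -- apply the key lemma to u₂
  obtain ⟨C₂, hC₂0, hC₂⟩ := key_radial_bound
    (fun t : ℝ => u₂ (t • EuclideanSpace.single (0 : Fin 2) (1:ℝ)))
    (fun r : ℝ => r ^ 2 - lam₂
      + (g₂ * u₂ (r • EuclideanSpace.single (0 : Fin 2) (1:ℝ)) ^ 2
        + g * u₁ (r • EuclideanSpace.single (0 : Fin 2) (1:ℝ)) ^ 2))
    ε (Real.sqrt lam₂) (1 + (g₂ * M₂ ^ 2 + g * M₁ ^ 2) / (4 * Real.sqrt lam₂ ^ 2))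
    hε hb₂ hFsm₂ (fun r => hpos₂ _) hF0₂
    (fun r hr => ode_line u₂ f₂ _ ε lam₂ hsm₂ hrad₂ hode₂ (lt_of_lt_of_le hb₂ hr))
    (by
      intro r hr
      show 0 ≤ r ^ 2 - lam₂
        + (g₂ * u₂ (r • EuclideanSpace.single (0 : Fin 2) (1:ℝ)) ^ 2
          + g * u₁ (r • EuclideanSpace.single (0 : Fin 2) (1:ℝ)) ^ 2)
      have h1 : 0 ≤ g₂ * u₂ (r • EuclideanSpace.single (0 : Fin 2) (1:ℝ)) ^ 2 :=
        mul_nonneg hg₂.le (sq_nonneg _)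
      have h2 : 0 ≤ g * u₁ (r • EuclideanSpace.single (0 : Fin 2) (1:ℝ)) ^ 2 :=
        mul_nonneg hg.le (sq_nonneg _)
      nlinarith [Real.sqrt_nonneg lam₂])
    (by
      intro r hr
      have hr0 : (0:ℝ) ≤ r := le_trans (by nlinarith) hr
      have hB := (hsqbd r hr0).2
      have hB0 : 0 ≤ g₂ * M₂ ^ 2 + g * M₁ ^ 2 := by
        have := mul_nonneg hg₂.le (sq_nonneg M₂)
        have := mul_nonneg hg.le (sq_nonneg M₁)
        linarith
      have h4b : 4 * Real.sqrt lam₂ ^ 2 ≤ r ^ 2 := by nlinarith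
      have hpos4 : (0:ℝ) < 4 * Real.sqrt lam₂ ^ 2 := by nlinarith
      have hdiv : g₂ * M₂ ^ 2 + g * M₁ ^ 2
          ≤ (g₂ * M₂ ^ 2 + g * M₁ ^ 2) / (4 * Real.sqrt lam₂ ^ 2) * r ^ 2 := by
        rw [div_mul_eq_mul_div, le_div_iff₀ hpos4]
        nlinarith [mul_le_mul_of_nonneg_left h4b hB0]
      nlinarith)
  -- combine
  refine ⟨max C₁ C₂, lt_of_lt_of_le hC₁0 (le_max_left _ _), ?_, ?_⟩
  · intro r hrlt
    have hr0 : (0:ℝ) < r := lt_trans (mul_pos two_pos hb₁) hrlt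
    have heq : deriv f₁ r
        = deriv (fun t : ℝ => u₁ (t • EuclideanSpace.single (0 : Fin 2) (1:ℝ))) r := by
      apply Filter.EventuallyEq.deriv_eq
      filter_upwards [isOpen_Ioi.mem_nhds hr0] with s hs
      show f₁ s = u₁ (s • EuclideanSpace.single (0 : Fin 2) (1:ℝ))
      rw [hrad₁ (s • EuclideanSpace.single (0 : Fin 2) (1:ℝ)),
        norm_smul_single s (le_of_lt hs)]
    have hfr : f₁ r = u₁ (r • EuclideanSpace.single (0 : Fin 2) (1:ℝ)) := by
      rw [hrad₁ (r • EuclideanSpace.single (0 : Fin 2) (1:ℝ)), norm_smul_single r hr0.le]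
    have hbound := hC₁ r hrlt.le
    rw [heq, hfr]
    have hru : 0 ≤ r * u₁ (r • EuclideanSpace.single (0 : Fin 2) (1:ℝ)) :=
      mul_nonneg hr0.le (hpos₁ _).le
    calc |deriv (fun t : ℝ => u₁ (t • EuclideanSpace.single (0 : Fin 2) (1:ℝ))) r|
        ≤ C₁ * r * u₁ (r • EuclideanSpace.single (0 : Fin 2) (1:ℝ)) := hbound
      _ ≤ max C₁ C₂ * r * u₁ (r • EuclideanSpace.single (0 : Fin 2) (1:ℝ)) := by
          nlinarith [le_max_left C₁ C₂]
  · intro r hrlt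
    have hr0 : (0:ℝ) < r := lt_trans (mul_pos two_pos hb₂) hrlt
    have heq : deriv f₂ r
        = deriv (fun t : ℝ => u₂ (t • EuclideanSpace.single (0 : Fin 2) (1:ℝ))) r := by
      apply Filter.EventuallyEq.deriv_eq
      filter_upwards [isOpen_Ioi.mem_nhds hr0] with s hs
      show f₂ s = u₂ (s • EuclideanSpace.single (0 : Fin 2) (1:ℝ))
      rw [hrad₂ (s • EuclideanSpace.single (0 : Fin 2) (1:ℝ)),
        norm_smul_single s (le_of_lt hs)]
    have hfr : f₂ r = u₂ (r • EuclideanSpace.single (0 : Fin 2) (1:ℝ)) := by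
      rw [hrad₂ (r • EuclideanSpace.single (0 : Fin 2) (1:ℝ)), norm_smul_single r hr0.le]
    have hbound := hC₂ r hrlt.le
    rw [heq, hfr]
    have hru : 0 ≤ r * u₂ (r • EuclideanSpace.single (0 : Fin 2) (1:ℝ)) :=
      mul_nonneg hr0.le (hpos₂ _).le
    calc |deriv (fun t : ℝ => u₂ (t • EuclideanSpace.single (0 : Fin 2) (1:ℝ))) r|
        ≤ C₂ * r * u₂ (r • EuclideanSpace.single (0 : Fin 2) (1:ℝ)) := hbound
      _ ≤ max C₁ C₂ * r * u₂ (r • EuclideanSpace.single (0 : Fin 2) (1:ℝ)) := by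
          nlinarith [le_max_right C₁ C₂]
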